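/- Let $a_1,\ldots,a_n$ be nonnegative integers with $\max_i a_i > 0$, and let $Y_1,\ldots,Y_n$ be i.i.d. Rademacher random variables. Then $\mathbb{P}\left(\sum_{k=1}^n a_k Y_k \neq 0\right) \geq 1/2$. -/

import Mathlib

open MeasureTheory ProbabilityTheory

/-- Lemma 2.1 (2.5): If `a₁,…,aₙ` are nonnegative integers, not all zero, and
`Y₁,…,Yₙ` are i.i.d. Rademacher random variables, then `ℙ(∑ aₖ Yₖ ≠ 0) ≥ 1/2`. -/
theorem rademacher_weighted_sum_ne_zero_ge_half
    {Ω : Type*} [MeasureSpace Ω] [IsProbabilityMeasure (ℙ : Measure Ω)]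
    {n : ℕ} (a : Fin n → ℤ) (ha : ∀ k, 0 ≤ a k) (ha' : ∃ k, 0 < a k)
    (Y : Fin n → Ω → ℤ) (hmeas : ∀ k, Measurable (Y k))
    (hindep : iIndepFun Y ℙ)
    (hplus : ∀ k, ℙ {ω | Y k ω = 1} = 1/2)
    (hminus : ∀ k, ℙ {ω | Y k ω = -1} = 1/2) :
    (1/2 : ENNReal) ≤ ℙ {ω | ∑ k, a k * Y k ω ≠ 0} := by
  obtain ⟨k, hk⟩ := ha'
  have hk0 : a k ≠ 0 := hk.ne'
  set f : Fin n → Ω → ℤ := fun j ω => a j * Y j ω with hf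
  have hfmeas : ∀ j, Measurable (f j) := fun j => (hmeas j).const_mul (a j)
  have hif : iIndepFun f ℙ := by
    have := hindep.comp (fun j => (a j * ·)) (fun j => measurable_const_mul (a j))
    exact this
  set T : Ω → ℤ := ∑ j ∈ Finset.univ.erase k, f j with hT
  have hTmeas : Measurable T := by
    have hTe : T = fun ω => ∑ j ∈ Finset.univ.erase k, f j ω := by
      ext ω; simp [hT]
    rw [hTe]
    exact Finset.measurable_sum _ (fun j _ => hfmeas j)
  have hTindep : IndepFun T (f k) ℙ :=
    iIndepFun.indepFun_finsetSum_of_notMem hif hfmeas (Finset.notMem_erase k _)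
  -- null set where Y k is neither 1 nor -1
  have hAB : Disjoint {ω | Y k ω = 1} {ω | Y k ω = -1} := by
    rw [Set.disjoint_left]
    intro ω h1 h2
    simp only [Set.mem_setOf_eq] at h1 h2
    omega
  have hABmeas : MeasurableSet {ω | Y k ω = 1} := (hmeas k) (measurableSet_singleton 1)
  have hABmeas' : MeasurableSet {ω | Y k ω = -1} := (hmeas k) (measurableSet_singleton (-1))
  have hN : ℙ ({ω | Y k ω = 1} ∪ {ω | Y k ω = -1})ᶜ = 0 := by
    rw [prob_compl_eq_zero_iff (hABmeas.union hABmeas')]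
    rw [measure_union hAB hABmeas', hplus k, hminus k]
    exact ENNReal.add_halves 1
  -- key: f k = a k ↔ Y k = 1, etc.
  have hfk1 : {ω | f k ω = a k} = {ω | Y k ω = 1} := by
    ext ω; simp only [Set.mem_setOf_eq, hf]
    constructor
    · intro h; have : a k * Y k ω = a k * 1 := by linarith
      exact mul_left_cancel₀ hk0 this
    · intro h; rw [h]; ring
  have hfk2 : {ω | f k ω = -a k} = {ω | Y k ω = -1} := by
    ext ω; simp only [Set.mem_setOf_eq, hf]
    constructor
    · intro h; have : a k * Y k ω = a k * (-1) := by linarith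
      exact mul_left_cancel₀ hk0 this
    · intro h; rw [h]; ring
  -- decompose the event {sum = 0}
  have hsum : ∀ ω, (∑ j, a j * Y j ω) = T ω + f k ω := by
    intro ω
    have := Finset.sum_erase_add Finset.univ (fun j => f j ω) (Finset.mem_univ k)
    simp only [hT, Finset.sum_apply]
    rw [← this]
  have hsub : {ω | ∑ j, a j * Y j ω = 0} ⊆
      (T ⁻¹' {-a k} ∩ {ω | Y k ω = 1}) ∪ (T ⁻¹' {a k} ∩ {ω | Y k ω = -1}) ∪
      ({ω | Y k ω = 1} ∪ {ω | Y k ω = -1})ᶜ := by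
    intro ω hω
    simp only [Set.mem_setOf_eq, hsum ω] at hω
    by_cases h1 : Y k ω = 1
    · left; left
      constructor
      · simp only [Set.mem_preimage, Set.mem_singleton_iff]
        have : f k ω = a k := by simp [hf, h1]
        omega
      · exact h1
    · by_cases h2 : Y k ω = -1
      · left; right
        constructor
        · simp only [Set.mem_preimage, Set.mem_singleton_iff]
          have : f k ω = -a k := by simp [hf, h2]
          omega
        · exact h2
      · right
        simp only [Set.mem_compl_iff, Set.mem_union, Set.mem_setOf_eq]
        tauto
  -- bound the measure of {sum = 0}
  have h1 : ℙ (T ⁻¹' {-a k} ∩ {ω | Y k ω = 1}) = ℙ (T ⁻¹' {-a k}) * (1/2) := by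
    have h := hTindep.measure_inter_preimage_eq_mul {-a k} {a k}
      (measurableSet_singleton _) (measurableSet_singleton _)
    have : f k ⁻¹' {a k} = {ω | Y k ω = 1} := by
      rw [← hfk1]; ext ω; simp
    rw [← this, h]
    congr 1
    rw [this, hplus k]
  have h2 : ℙ (T ⁻¹' {a k} ∩ {ω | Y k ω = -1}) = ℙ (T ⁻¹' {a k}) * (1/2) := by
    have h := hTindep.measure_inter_preimage_eq_mul {a k} {-a k}
      (measurableSet_singleton _) (measurableSet_singleton _)
    have : f k ⁻¹' {-a k} = {ω | Y k ω = -1} := by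
      rw [← hfk2]; ext ω; simp
    rw [← this, h]
    congr 1
    rw [this, hminus k]
  have hdisj : Disjoint (T ⁻¹' {-a k}) (T ⁻¹' {a k}) := by
    rw [Set.disjoint_left]
    intro ω ha1 ha2
    simp only [Set.mem_preimage, Set.mem_singleton_iff] at ha1 ha2
    omega
  have hsumT : ℙ (T ⁻¹' {-a k}) + ℙ (T ⁻¹' {a k}) ≤ 1 := by
    rw [← measure_union hdisj (hTmeas (measurableSet_singleton _))]
    exact prob_le_one
  have hzero : ℙ {ω | ∑ j, a j * Y j ω = 0} ≤ 1/2 := by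
    calc ℙ {ω | ∑ j, a j * Y j ω = 0}
        ≤ ℙ ((T ⁻¹' {-a k} ∩ {ω | Y k ω = 1}) ∪ (T ⁻¹' {a k} ∩ {ω | Y k ω = -1}) ∪
            ({ω | Y k ω = 1} ∪ {ω | Y k ω = -1})ᶜ) := measure_mono hsub
      _ ≤ ℙ ((T ⁻¹' {-a k} ∩ {ω | Y k ω = 1}) ∪ (T ⁻¹' {a k} ∩ {ω | Y k ω = -1})) +
            ℙ (({ω | Y k ω = 1} ∪ {ω | Y k ω = -1})ᶜ) := measure_union_le _ _
      _ = ℙ ((T ⁻¹' {-a k} ∩ {ω | Y k ω = 1}) ∪ (T ⁻¹' {a k} ∩ {ω | Y k ω = -1})) := by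
            rw [hN, add_zero]
      _ ≤ ℙ (T ⁻¹' {-a k} ∩ {ω | Y k ω = 1}) + ℙ (T ⁻¹' {a k} ∩ {ω | Y k ω = -1}) :=
            measure_union_le _ _
      _ = (ℙ (T ⁻¹' {-a k}) + ℙ (T ⁻¹' {a k})) * (1/2) := by rw [h1, h2, add_mul]
      _ ≤ 1 * (1/2) := by
            exact mul_le_mul_left hsumT _
      _ = 1/2 := one_mul _
  have hmeasS : MeasurableSet {ω | ∑ j, a j * Y j ω = 0} := by
    have : Measurable fun ω => ∑ j, a j * Y j ω := by
      apply Finset.measurable_sum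
      exact fun j _ => (hmeas j).const_mul (a j)
    exact this (measurableSet_singleton 0)
  have hcompl : {ω | ∑ k, a k * Y k ω ≠ 0} = {ω | ∑ j, a j * Y j ω = 0}ᶜ := by
    ext ω; simp
  rw [hcompl, prob_compl_eq_one_sub hmeasS]
  have : (1:ENNReal)/2 = 1 - 1/2 := by
    rw [one_div, ENNReal.one_sub_inv_two]
  rw [this]
  exact tsub_le_tsub_left hzero 1
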